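/- Let α ∈ (0,1), T > 0, b > 0, m ∈ ℕ, and let s : [0,T] → ℝ be absolutely continuous with s(0) = b, ṡ ≥ 0, and t ↦ t^{1−α} ṡ(t) continuous on [0,T]. Then for every τ > 0, lim_{t → τ⁺} (t−τ)^{−α} B(τ,t) = 0 and lim_{t → τ⁺} (t−τ)^{−α} D̃(τ,t) = 0 (as (m+1)×(m+1) matrices). -/

import Mathlib

open MeasureTheory Set Filter
open scoped Topology

/-- Eigenvalues `λ_n(t) = (π / s(t)) (n + 1/2)`. -/
noncomputable def lam (s : ℝ → ℝ) (n : ℕ) (t : ℝ) : ℝ :=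
  Real.pi / s t * (n + 1 / 2)

/-- Eigenfunctions `φ_n(x,t) = √(2/s(t)) cos(λ_n(t) x)`. -/
noncomputable def phi (s : ℝ → ℝ) (n : ℕ) (x t : ℝ) : ℝ :=
  Real.sqrt (2 / s t) * Real.cos (lam s n t * x)

/-- `B(τ,t)_{n,k} = ∫₀^{s(τ)} φ_n(x,τ)[φ_k(x,t) − φ_k(x,τ)] dx`. -/
noncomputable def Bmat (s : ℝ → ℝ) (m : ℕ) (τ t : ℝ) :
    Matrix (Fin (m + 1)) (Fin (m + 1)) ℝ :=
  Matrix.of fun n k : Fin (m + 1) =>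
    ∫ x in (0:ℝ)..(s τ), phi s n x τ * (phi s k x t - phi s k x τ)

/-- `D̃(τ,t)_{n,k} = ∫₀^{s(τ)} ∂_τ φ_n(x,τ)[φ_k(x,t) − φ_k(x,τ)] dx`. -/
noncomputable def Dtil (s : ℝ → ℝ) (m : ℕ) (τ t : ℝ) :
    Matrix (Fin (m + 1)) (Fin (m + 1)) ℝ :=
  Matrix.of fun n k : Fin (m + 1) =>
    ∫ x in (0:ℝ)..(s τ), deriv (fun r => phi s n x r) τ * (phi s k x t - phi s k x τ)

/-- The eigenfunction as a function of the moving-boundary value `y`. -/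
noncomputable def Fc (c x y : ℝ) : ℝ := Real.sqrt (2 / y) * Real.cos (Real.pi / y * c * x)

/-- Derivative of `Fc c x` in `y`. -/
noncomputable def Fd (c x y : ℝ) : ℝ :=
  1 / (2 * Real.sqrt (2 / y)) * (2 * -(y ^ 2)⁻¹) * Real.cos (Real.pi / y * c * x) +
    Real.sqrt (2 / y) * (-Real.sin (Real.pi / y * c * x) * (Real.pi * -(y ^ 2)⁻¹ * c * x))

lemma phi_eq_Fc (s : ℝ → ℝ) (k : ℕ) (x t : ℝ) : phi s k x t = Fc ((k : ℝ) + 1 / 2) x (s t) := by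
  simp [phi, lam, Fc]

lemma hasDerivAt_Fc (c x : ℝ) {y : ℝ} (hy : 0 < y) :
    HasDerivAt (fun y => Fc c x y) (Fd c x y) y := by
  have hy' := hy.ne'
  have h2y : (2 : ℝ) / y ≠ 0 := by positivity
  have hinv : HasDerivAt (fun y : ℝ => y⁻¹) (-(y ^ 2)⁻¹) y := hasDerivAt_inv hy'
  have hdiv2 : HasDerivAt (fun y : ℝ => 2 / y) (2 * -(y ^ 2)⁻¹) y := by
    simpa [div_eq_mul_inv] using hinv.const_mul 2
  have hsqrt : HasDerivAt (fun y : ℝ => Real.sqrt (2 / y))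
      (1 / (2 * Real.sqrt (2 / y)) * (2 * -(y ^ 2)⁻¹)) y := by
    have h := (Real.hasDerivAt_sqrt h2y).comp y hdiv2
    simpa only [Function.comp_def] using h
  have harg : HasDerivAt (fun y : ℝ => Real.pi / y * c * x)
      (Real.pi * -(y ^ 2)⁻¹ * c * x) y := by
    simpa [div_eq_mul_inv] using ((hinv.const_mul Real.pi).mul_const c).mul_const x
  have hm : HasDerivAt (fun y => Real.sqrt (2 / y) * Real.cos (Real.pi / y * c * x))
      (1 / (2 * Real.sqrt (2 / y)) * (2 * -(y ^ 2)⁻¹) * Real.cos (Real.pi / y * c * x) +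
        Real.sqrt (2 / y) * (-Real.sin (Real.pi / y * c * x) * (Real.pi * -(y ^ 2)⁻¹ * c * x))) y :=
    hsqrt.mul harg.cos
  simpa [Fc, Fd] using hm

lemma exists_Fd_bound (c b B X : ℝ) (hb : 0 < b) :
    ∃ L, 0 ≤ L ∧ ∀ x ∈ Icc (0 : ℝ) X, ∀ y ∈ Icc b B, |Fd c x y| ≤ L := by
  have hK : IsCompact (Icc b B ×ˢ Icc (0 : ℝ) X) := isCompact_Icc.prod isCompact_Icc
  have hy : ∀ p : ℝ × ℝ, p ∈ Icc b B ×ˢ Icc (0 : ℝ) X → p.1 ≠ 0 := fun p hp =>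
    (lt_of_lt_of_le hb hp.1.1).ne'
  have hcont : ContinuousOn (fun p : ℝ × ℝ => Fd c p.2 p.1) (Icc b B ×ˢ Icc (0 : ℝ) X) := by
    have c1 : ContinuousOn (fun p : ℝ × ℝ => (2 : ℝ) / p.1) (Icc b B ×ˢ Icc (0 : ℝ) X) :=
      continuousOn_const.div continuous_fst.continuousOn hy
    have c2 : ContinuousOn (fun p : ℝ × ℝ => Real.sqrt (2 / p.1)) (Icc b B ×ˢ Icc (0 : ℝ) X) :=
      Real.continuous_sqrt.comp_continuousOn c1
    have c2ne : ∀ p ∈ Icc b B ×ˢ Icc (0 : ℝ) X, 2 * Real.sqrt (2 / p.1) ≠ 0 := by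
      intro p hp
      have h1 : 0 < p.1 := lt_of_lt_of_le hb hp.1.1
      have h2 : 0 < Real.sqrt (2 / p.1) := Real.sqrt_pos.mpr (by positivity)
      positivity
    have c3 : ContinuousOn (fun p : ℝ × ℝ => ((p.1 ^ 2)⁻¹ : ℝ)) (Icc b B ×ˢ Icc (0 : ℝ) X) :=
      ((continuous_fst.pow 2).continuousOn).inv₀ fun p hp => pow_ne_zero _ (hy p hp)
    have c4 : ContinuousOn (fun p : ℝ × ℝ => Real.pi / p.1 * c * p.2)
        (Icc b B ×ˢ Icc (0 : ℝ) X) :=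
      ((continuousOn_const.div continuous_fst.continuousOn hy).mul continuousOn_const).mul
        continuous_snd.continuousOn
    exact (((continuousOn_const.div (continuousOn_const.mul c2) c2ne).mul
        (continuousOn_const.mul c3.neg)).mul
          (Real.continuous_cos.comp_continuousOn c4)).add
      (c2.mul (((Real.continuous_sin.comp_continuousOn c4).neg).mul
        (((continuousOn_const.mul c3.neg).mul continuousOn_const).mul
          continuous_snd.continuousOn)))
  obtain ⟨C, hC⟩ := hK.exists_bound_of_continuousOn hcont
  refine ⟨max C 0, le_max_right _ _, fun x hx y hyy => ?_⟩
  have h := hC (y, x) ⟨hyy, hx⟩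
  simp only [Real.norm_eq_abs] at h
  exact h.trans (le_max_left _ _)

lemma Fc_lip {c x b B L : ℝ} (hb : 0 < b)
    (hL : ∀ y ∈ Icc b B, |Fd c x y| ≤ L) {y₁ y₂ : ℝ}
    (h₁ : y₁ ∈ Icc b B) (h₂ : y₂ ∈ Icc b B) :
    |Fc c x y₂ - Fc c x y₁| ≤ L * |y₂ - y₁| := by
  have h := Convex.norm_image_sub_le_of_norm_hasDerivWithin_le
    (f := fun y => Fc c x y) (f' := fun y => Fd c x y) (C := L) (s := Icc b B)
    (fun y hy => (hasDerivAt_Fc c x (lt_of_lt_of_le hb hy.1)).hasDerivWithinAt)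
    (fun y hy => by simpa [Real.norm_eq_abs] using hL y hy) (convex_Icc b B) h₁ h₂
  simpa [Real.norm_eq_abs] using h

/-- For every `τ > 0`, `(t−τ)^{−α} B(τ,t) → 0` and
`(t−τ)^{−α} D̃(τ,t) → 0` (entrywise) as `t → τ⁺`. -/
theorem stmt_15 (α T b : ℝ) (m : ℕ) (hα : α ∈ Set.Ioo (0:ℝ) 1) (hT : 0 < T) (hb : 0 < b)
    (s s' : ℝ → ℝ)
    (hs'int : IntegrableOn s' (Set.Icc 0 T))
    (hsAC : ∀ t ∈ Set.Icc (0:ℝ) T, s t = b + ∫ τ in (0:ℝ)..t, s' τ)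
    (hs'pos : ∀ t ∈ Set.Icc (0:ℝ) T, 0 ≤ s' t)
    (hs'cont : ContinuousOn (fun t : ℝ => t ^ (1 - α) * s' t) (Set.Icc 0 T)) :
    ∀ τ ∈ Set.Ioo (0:ℝ) T, ∀ n k : Fin (m + 1),
      Filter.Tendsto (fun t => (t - τ) ^ (-α) * Bmat s m τ t n k)
        (nhdsWithin τ (Set.Ioc τ T)) (nhds 0) ∧
      Filter.Tendsto (fun t => (t - τ) ^ (-α) * Dtil s m τ t n k)
        (nhdsWithin τ (Set.Ioc τ T)) (nhds 0) := by
  obtain ⟨hα0, hα1⟩ := hα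
  intro τ hτ n k
  obtain ⟨hτ0, hτT⟩ := hτ
  have hτIcc : τ ∈ Icc (0 : ℝ) T := ⟨hτ0.le, hτT.le⟩
  -- interval integrability of s' on subintervals of [0,T]
  have hII : ∀ a c : ℝ, 0 ≤ a → a ≤ c → c ≤ T → IntervalIntegrable s' volume a c := by
    intro a c ha hac hcT
    have h := hs'int.mono_set (show uIcc a c ⊆ Icc 0 T by
      rw [uIcc_of_le hac]; exact Icc_subset_Icc ha hcT)
    exact h.intervalIntegrable
  -- monotonicity of s on [0,T]
  have hmono : ∀ t₁ ∈ Icc (0 : ℝ) T, ∀ t₂ ∈ Icc (0 : ℝ) T, t₁ ≤ t₂ → s t₁ ≤ s t₂ := by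
    intro t₁ h₁ t₂ h₂ h12
    rw [hsAC t₁ h₁, hsAC t₂ h₂]
    have hadd := intervalIntegral.integral_add_adjacent_intervals
      (hII 0 t₁ le_rfl h₁.1 h₁.2) (hII t₁ t₂ h₁.1 h12 h₂.2)
    have hnn : 0 ≤ ∫ x in t₁..t₂, s' x :=
      intervalIntegral.integral_nonneg h12
        (fun u hu => hs'pos u ⟨le_trans h₁.1 hu.1, le_trans hu.2 h₂.2⟩)
    linarith
  have hs0 : s 0 = b := by
    rw [hsAC 0 ⟨le_rfl, hT.le⟩]; simp
  have hsb : ∀ t ∈ Icc (0 : ℝ) T, b ≤ s t := by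
    intro t ht
    have := hmono 0 ⟨le_rfl, hT.le⟩ t ht ht.1
    rwa [hs0] at this
  have hsτpos : 0 < s τ := lt_of_lt_of_le hb (hsb τ hτIcc)
  have hsτX : s τ ∈ Icc b (s T) := ⟨hsb τ hτIcc, hmono τ hτIcc T ⟨hT.le, le_rfl⟩ hτT.le⟩
  -- continuity of s' at τ
  have hwC : ContinuousAt (fun t => t ^ (1 - α) * s' t) τ :=
    hs'cont.continuousAt (Icc_mem_nhds hτ0 hτT)
  have hs'contτ : ContinuousAt s' τ := by
    have hpow : ContinuousAt (fun t : ℝ => t ^ (α - 1)) τ :=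
      Real.continuousAt_rpow_const τ (α - 1) (Or.inl hτ0.ne')
    have hprod : ContinuousAt (fun t => t ^ (α - 1) * (t ^ (1 - α) * s' t)) τ :=
      hpow.mul hwC
    apply hprod.congr
    filter_upwards [Ioo_mem_nhds hτ0 hτT] with t ht
    have htpos : (0 : ℝ) < t := ht.1
    rw [← mul_assoc, ← Real.rpow_add htpos]
    norm_num
  -- s has derivative s' τ at τ
  have hmeas : StronglyMeasurableAtFilter s' (𝓝 τ) :=
    ⟨Icc 0 T, Icc_mem_nhds hτ0 hτT, hs'int.aestronglyMeasurable⟩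
  have hderiv : HasDerivAt s (s' τ) τ := by
    have h1 : HasDerivAt (fun u => b + ∫ x in (0:ℝ)..u, s' x) (s' τ) τ :=
      (intervalIntegral.integral_hasDerivAt_right (hII 0 τ le_rfl hτ0.le hτT.le)
        hmeas hs'contτ).const_add b
    apply h1.congr_of_eventuallyEq
    filter_upwards [Icc_mem_nhds hτ0 hτT] with t ht
    exact hsAC t ht
  have hs'τnn : 0 ≤ s' τ := hs'pos τ hτIcc
  -- master key lemma
  have key : ∀ f : ℝ → ℝ, ∀ Mf : ℝ, 0 ≤ Mf → (∀ x ∈ Icc (0 : ℝ) (s τ), |f x| ≤ Mf) →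
      Tendsto (fun t => (t - τ) ^ (-α) *
        ∫ x in (0:ℝ)..(s τ), f x * (phi s (k : ℕ) x t - phi s (k : ℕ) x τ))
        (𝓝[Ioc τ T] τ) (𝓝 0) := by
    intro f Mf hMf hf
    obtain ⟨L, hL0, hL⟩ := exists_Fd_bound ((k : ℝ) + 1 / 2) b (s T) (s τ) hb
    set C : ℝ := Mf * L * s τ with hC
    have hC0 : 0 ≤ C := by positivity
    apply squeeze_zero_norm'
      (a := fun t => C * ((t - τ) ^ (1 - α) * ((s t - s τ) / (t - τ))))
    · filter_upwards [self_mem_nhdsWithin] with t ht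
      have htτ : τ < t := ht.1
      have htT : t ≤ T := ht.2
      have htIcc : t ∈ Icc (0 : ℝ) T := ⟨le_trans hτ0.le htτ.le, htT⟩
      have hstX : s t ∈ Icc b (s T) := ⟨hsb t htIcc, hmono t htIcc T ⟨hT.le, le_rfl⟩ htT⟩
      have hstτ : s τ ≤ s t := hmono τ hτIcc t htIcc htτ.le
      have hpos : (0 : ℝ) < t - τ := by linarith
      have hrp : (0 : ℝ) ≤ (t - τ) ^ (-α) := Real.rpow_nonneg hpos.le _
      -- pointwise bound on the integrand
      have hbd : ∀ x ∈ Set.uIoc (0 : ℝ) (s τ),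
          ‖f x * (phi s (k : ℕ) x t - phi s (k : ℕ) x τ)‖ ≤ Mf * (L * (s t - s τ)) := by
        intro x hx
        rw [Set.uIoc_of_le hsτpos.le] at hx
        have hxI : x ∈ Icc (0 : ℝ) (s τ) := ⟨hx.1.le, hx.2⟩
        have hlip : |phi s (k : ℕ) x t - phi s (k : ℕ) x τ| ≤ L * (s t - s τ) := by
          rw [phi_eq_Fc, phi_eq_Fc]
          have := Fc_lip hb (fun y hy => hL x hxI y hy) hsτX hstX
          rwa [abs_of_nonneg (sub_nonneg.mpr hstτ)] at this
        rw [Real.norm_eq_abs, abs_mul]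
        exact mul_le_mul (hf x hxI) hlip (abs_nonneg _) hMf
      have hint := intervalIntegral.norm_integral_le_of_norm_le_const hbd
      rw [Real.norm_eq_abs, abs_mul, abs_of_nonneg hrp]
      have h1 : |∫ x in (0:ℝ)..(s τ), f x * (phi s (k : ℕ) x t - phi s (k : ℕ) x τ)| ≤
          Mf * (L * (s t - s τ)) * s τ := by
        rw [Real.norm_eq_abs] at hint
        calc |∫ x in (0:ℝ)..(s τ), f x * (phi s (k : ℕ) x t - phi s (k : ℕ) x τ)|
            ≤ Mf * (L * (s t - s τ)) * |s τ - 0| := hint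
          _ = Mf * (L * (s t - s τ)) * s τ := by
              rw [sub_zero, abs_of_nonneg hsτpos.le]
      calc (t - τ) ^ (-α) * |∫ x in (0:ℝ)..(s τ), f x * (phi s (k:ℕ) x t - phi s (k:ℕ) x τ)|
          ≤ (t - τ) ^ (-α) * (Mf * (L * (s t - s τ)) * s τ) :=
            mul_le_mul_of_nonneg_left h1 hrp
        _ = C * ((t - τ) ^ (1 - α) * ((s t - s τ) / (t - τ))) := by
            have hrw : (t - τ) ^ (1 - α) = (t - τ) ^ (-α) * (t - τ) := by
              rw [show (1 - α) = -α + 1 by ring, Real.rpow_add hpos, Real.rpow_one]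
            rw [hrw, hC]
            field_simp
    · have h1 : Tendsto (fun t : ℝ => (t - τ) ^ (1 - α)) (𝓝[Ioc τ T] τ) (𝓝 0) := by
        have hc : ContinuousAt (fun u : ℝ => u ^ (1 - α)) 0 :=
          Real.continuousAt_rpow_const 0 (1 - α) (Or.inr (by linarith))
        have hsub : Tendsto (fun t : ℝ => t - τ) (𝓝[Ioc τ T] τ) (𝓝 0) := by
          have h0 : Tendsto (fun t : ℝ => t - τ) (𝓝 τ) (𝓝 (τ - τ)) :=
            (continuous_id.sub continuous_const).tendsto τ
          rw [sub_self] at h0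
          exact h0.mono_left nhdsWithin_le_nhds
        have := hc.tendsto.comp hsub
        simpa [Function.comp_def, Real.zero_rpow (by linarith : (1 : ℝ) - α ≠ 0)] using this
      have h2 : Tendsto (fun t : ℝ => (s t - s τ) / (t - τ)) (𝓝[Ioc τ T] τ) (𝓝 (s' τ)) := by
        have hslope := hasDerivAt_iff_tendsto_slope.mp hderiv
        have hmono' : 𝓝[Ioc τ T] τ ≤ 𝓝[≠] τ :=
          nhdsWithin_mono τ (fun t ht => ht.1.ne')
        exact (hslope.mono_left hmono').congr fun t => slope_def_field s τ t
      have := (h1.mul h2).const_mul C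
      simpa using this
  constructor
  · -- B matrix entry
    have hMf : ∀ x ∈ Icc (0 : ℝ) (s τ), |phi s (n : ℕ) x τ| ≤ Real.sqrt (2 / s τ) := by
      intro x hx
      rw [phi, abs_mul, abs_of_nonneg (Real.sqrt_nonneg _)]
      calc Real.sqrt (2 / s τ) * |Real.cos (lam s (n:ℕ) τ * x)| ≤ Real.sqrt (2 / s τ) * 1 :=
            mul_le_mul_of_nonneg_left (Real.abs_cos_le_one _) (Real.sqrt_nonneg _)
        _ = Real.sqrt (2 / s τ) := mul_one _
    have := key (fun x => phi s (n : ℕ) x τ) (Real.sqrt (2 / s τ)) (Real.sqrt_nonneg _) hMf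
    simpa [Bmat] using this
  · -- D matrix entry
    obtain ⟨Ln, hLn0, hLn⟩ := exists_Fd_bound ((n : ℝ) + 1 / 2) b (s T) (s τ) hb
    have hderφ : ∀ x : ℝ, HasDerivAt (fun r => phi s (n : ℕ) x r)
        (Fd ((n : ℝ) + 1 / 2) x (s τ) * s' τ) τ := by
      intro x
      have h := (hasDerivAt_Fc ((n : ℝ) + 1 / 2) x hsτpos).comp τ hderiv
      apply h.congr_of_eventuallyEq
      filter_upwards with r
      simp [Function.comp, phi_eq_Fc]
    have hMf : ∀ x ∈ Icc (0 : ℝ) (s τ), |deriv (fun r => phi s (n : ℕ) x r) τ| ≤ Ln * s' τ := by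
      intro x hx
      rw [(hderφ x).deriv, abs_mul, abs_of_nonneg hs'τnn]
      exact mul_le_mul_of_nonneg_right (hLn x hx (s τ) hsτX) hs'τnn
    have := key (fun x => deriv (fun r => phi s (n : ℕ) x r) τ) (Ln * s' τ)
      (mul_nonneg hLn0 hs'τnn) hMf
    simpa [Dtil] using this
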